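/- If f : ℝⁿ → ℝ is locally bounded, γ > 0, and M^γ(M_γ f) = f pointwise, then f is (1/γ)-weakly convex, i.e., x ↦ f(x) + (1/(2γ))‖x‖² is convex. -/

import Mathlib

open scoped RealInnerProductSpace
open Filter Topology

noncomputable section

/-- Lower Moreau envelope (extended-real valued). -/
def lowerEnv {n : ℕ} (γ : ℝ) (f : EuclideanSpace ℝ (Fin n) → ℝ)
    (x : EuclideanSpace ℝ (Fin n)) : EReal :=
  ⨅ y, ((f y + ‖y - x‖ ^ 2 / (2 * γ) : ℝ) : EReal)

/-- Upper Moreau envelope of an extended-real valued function. -/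
def upperEnvE {n : ℕ} (γ : ℝ) (g : EuclideanSpace ℝ (Fin n) → EReal)
    (x : EuclideanSpace ℝ (Fin n)) : EReal :=
  ⨆ y, (g y - ((‖y - x‖ ^ 2 / (2 * γ) : ℝ) : EReal))

lemma norm_id_aux {n : ℕ} (x z y : EuclideanSpace ℝ (Fin n)) (a b : ℝ) (hab : a + b = 1) :
    a*‖y-x‖^2 + b*‖y-z‖^2 - ‖y-(a•x+b•z)‖^2 = a*‖x‖^2 + b*‖z‖^2 - ‖a•x+b•z‖^2 := by
  have h : ∀ u : EuclideanSpace ℝ (Fin n), ‖u‖^2 = (inner ℝ u u : ℝ) :=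
    fun u => (real_inner_self_eq_norm_sq u).symm
  have hb : b = 1 - a := by linarith
  subst hb
  simp only [h, inner_sub_left, inner_sub_right, inner_add_left, inner_add_right,
    real_inner_smul_left, real_inner_smul_right, real_inner_comm y x, real_inner_comm y z,
    real_inner_comm z x]
  ring

theorem stmt_3 {n : ℕ} (γ : ℝ) (hγ : 0 < γ) (f : EuclideanSpace ℝ (Fin n) → ℝ)
    (hlb : ∀ x, ∃ C r : ℝ, 0 < r ∧ ∀ y, dist y x < r → |f y| ≤ C)
    (heq : ∀ x, upperEnvE γ (lowerEnv γ f) x = (f x : EReal)) :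
    ConvexOn ℝ Set.univ (fun x => f x + ‖x‖ ^ 2 / (2 * γ)) := by
  refine ⟨convex_univ, ?_⟩
  intro x _ z _ a b ha hb hab
  simp only [smul_eq_mul]
  set c : EuclideanSpace ℝ (Fin n) := a • x + b • z with hc
  set K : ℝ := a * (f x + ‖x‖^2/(2*γ)) + b * (f z + ‖z‖^2/(2*γ)) - ‖c‖^2/(2*γ) with hK
  clear_value c K
  have h2γ : (0:ℝ) < 2*γ := by linarith
  have hfc : f c ≤ K := by
    have h1 : (f c : EReal) ≤ (K : EReal) := by
      rw [← heq c]
      simp only [upperEnvE]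
      refine iSup_le fun y => ?_
      have hne : lowerEnv γ f y ≠ ⊤ := by
        intro ht
        have h3 : lowerEnv γ f y ≤ ((f y + ‖y - y‖^2/(2*γ) : ℝ) : EReal) :=
          iInf_le (fun y' => ((f y' + ‖y' - y‖ ^ 2 / (2 * γ) : ℝ) : EReal)) y
        rw [ht] at h3
        exact (EReal.coe_ne_top _) (top_le_iff.mp h3)
      rcases eq_or_ne (lowerEnv γ f y) ⊥ with hbot | hbot
      · rw [hbot, EReal.bot_sub]
        exact bot_le
      · obtain ⟨r, hr⟩ : ∃ r : ℝ, lowerEnv γ f y = (r : EReal) := by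
          lift lowerEnv γ f y to ℝ using ⟨hne, hbot⟩ with r
          exact ⟨r, rfl⟩
        have hx' : lowerEnv γ f y - ((‖y - x‖^2/(2*γ) : ℝ) : EReal) ≤ (f x : EReal) := by
          rw [← heq x]
          exact le_iSup (fun y' => lowerEnv γ f y' - ((‖y' - x‖ ^ 2 / (2 * γ) : ℝ) : EReal)) y
        have hz' : lowerEnv γ f y - ((‖y - z‖^2/(2*γ) : ℝ) : EReal) ≤ (f z : EReal) := by
          rw [← heq z]
          exact le_iSup (fun y' => lowerEnv γ f y' - ((‖y' - z‖ ^ 2 / (2 * γ) : ℝ) : EReal)) y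
        rw [hr] at hx' hz' ⊢
        rw [← EReal.coe_sub] at hx' hz' ⊢
        rw [EReal.coe_le_coe_iff] at hx' hz' ⊢
        have key := norm_id_aux x z y a b hab
        have key2 : (a*‖y-x‖^2 + b*‖y-z‖^2 - ‖y-c‖^2)/(2*γ)
            = (a*‖x‖^2 + b*‖z‖^2 - ‖c‖^2)/(2*γ) := by rw [hc, key]
        have hxa := mul_le_mul_of_nonneg_left hx' ha
        have hzb := mul_le_mul_of_nonneg_left hz' hb
        rw [hK]
        have e1 : a * (r - ‖y - x‖^2/(2*γ)) = a*r - (a*‖y-x‖^2)/(2*γ) := by ring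
        have e2 : b * (r - ‖y - z‖^2/(2*γ)) = b*r - (b*‖y-z‖^2)/(2*γ) := by ring
        rw [e1] at hxa; rw [e2] at hzb
        have har : a*r + b*r = r := by rw [← add_mul, hab, one_mul]
        rw [sub_div, sub_div, add_div, add_div] at key2
        rw [mul_add a, mul_add b]
        have m1 := mul_div_assoc a (‖x‖^2) (2*γ)
        have m2 := mul_div_assoc b (‖z‖^2) (2*γ)
        linarith
    exact_mod_cast h1
  linarith
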